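/- Let T be a threshold graph with the notation above. Then D(T,x) = Σ_{r=1}^m x^{α_r}(1+x)^{β_r} + ε x^{|I|}, where β_r = |P_r|, α_r = |I_r| + 1, and ε = 1 if the isolated side I is a dominating set and ε = 0 otherwise. Moreover these parameters satisfy α_1 ≥ … ≥ α_m ≥ 1, β_1 < … < β_m, and α_{r+1} + β_{r+1} = α_r + β_r + 1. -/
import Mathlib


open Finset Polynomial

/-- The closed neighborhood of a vertex as a `Finset`. -/
def closedNbhd {V : Type*} [Fintype V] [DecidableEq V] (G : SimpleGraph V)
    [DecidableRel G.Adj] (v : V) : Finset V :=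
  insert v (G.neighborFinset v)

/-- The canonical dominating set attached to the dominating vertex `cr` and a
subset `A` of the vertices preceding `cr`. -/
def domF {n : ℕ} (side : Fin n → Bool) (cr : Fin n) (A : Finset (Fin n)) : Finset (Fin n) :=
  insert cr ((Finset.univ.filter (fun j => side j = false ∧ cr < j)) ∪ A)

lemma sum_powerset_pow_card {σ : Type*} [DecidableEq σ] (s : Finset σ) :
    ∑ A ∈ s.powerset, (X : Polynomial ℕ) ^ A.card = (1 + X) ^ s.card := by
  have h := Finset.prod_add (fun _ : σ => (X : Polynomial ℕ)) (fun _ => 1) s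
  simp only [Finset.prod_const, Finset.prod_const_one, mul_one, one_pow] at h
  rw [add_comm]
  exact h.symm

/-- Closed form for the domination polynomial of a threshold graph:
`D(T,x) = Σ_{r=1}^m x^{α_r}(1+x)^{β_r} + ε x^{|I|}`, where `β_r = |P_r|`,
`α_r = |I_r| + 1`, `ε = 1` iff the isolated side `I` is dominating; moreover
`α_1 ≥ … ≥ α_m ≥ 1`, `β_1 < … < β_m`, and `α_{r+1} + β_{r+1} = α_r + β_r + 1`. -/
theorem threshold_domination_polynomial {n m : ℕ} (G : SimpleGraph (Fin n))
    [DecidableRel G.Adj] (side : Fin n → Bool)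
    (hside : ∀ i j : Fin n, i < j → (G.Adj i j ↔ side j = true))
    (c : Fin m → Fin n) (hmono : StrictMono c)
    (hc : ∀ j : Fin n, side j = true ↔ ∃ r : Fin m, c r = j) :
    letI I : Finset (Fin n) := univ.filter (fun j : Fin n => side j = false)
    letI β : Fin m → ℕ := fun r => (univ.filter (fun j : Fin n => j < c r)).card
    letI α : Fin m → ℕ :=
      fun r => (univ.filter (fun j : Fin n => side j = false ∧ c r < j)).card + 1
    letI ε : ℕ := if ∀ v : Fin n, ∃ u ∈ I, u ∈ closedNbhd G v then 1 else 0
    ((∑ S ∈ univ.powerset.filter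
          (fun S : Finset (Fin n) => ∀ v : Fin n, ∃ u ∈ S, u ∈ closedNbhd G v),
        (X : Polynomial ℕ) ^ S.card)
      = (∑ r : Fin m, (X : Polynomial ℕ) ^ (α r) * (1 + X) ^ (β r)) + ε • X ^ I.card)
    ∧ (∀ r r' : Fin m, r ≤ r' → α r' ≤ α r)
    ∧ (∀ r : Fin m, 1 ≤ α r)
    ∧ (∀ r r' : Fin m, r < r' → β r < β r')
    ∧ ∀ (r : ℕ) (h1 : r < m) (h2 : r + 1 < m),
        α ⟨r + 1, h2⟩ + β ⟨r + 1, h2⟩ = α ⟨r, h1⟩ + β ⟨r, h1⟩ + 1 := by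
  have hsideC : ∀ r : Fin m, side (c r) = true := fun r => (hc (c r)).mpr ⟨r, rfl⟩
  have hmem : ∀ v u : Fin n, u ∈ closedNbhd G v ↔ (u = v ∨ G.Adj v u) := by
    intro v u
    simp [closedNbhd, SimpleGraph.mem_neighborFinset]
  have hAdj : ∀ u v : Fin n, G.Adj u v ↔ ((u < v ∧ side v = true) ∨ (v < u ∧ side u = true)) := by
    intro u v
    rcases lt_trichotomy u v with h | h | h
    · rw [hside u v h]
      constructor
      · exact fun hs => Or.inl ⟨h, hs⟩
      · rintro (⟨_, hs⟩ | ⟨h', _⟩)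
        · exact hs
        · exact absurd h (lt_asymm h')
    · subst h
      simp [lt_irrefl]
    · rw [G.adj_comm, hside v u h]
      constructor
      · exact fun hs => Or.inr ⟨h, hs⟩
      · rintro (⟨h', _⟩ | ⟨_, hs⟩)
        · exact absurd h' (lt_asymm h)
        · exact hs
  have hβval : ∀ r : Fin m, (univ.filter (fun j : Fin n => j < c r)).card = (c r : ℕ) := by
    intro r
    rw [show (univ.filter (fun j : Fin n => j < c r)) = Finset.Iio (c r) from by
      ext j; simp]
    exact Fin.card_Iio (c r)
  have hTcount : ∀ r : Fin m,
      (univ.filter (fun j : Fin n => side j = true ∧ c r < j)).card + ((r : ℕ) + 1) = m := by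
    intro r
    have himg : (univ.filter (fun j : Fin n => side j = true ∧ c r < j))
        = (Finset.Ioi r).image c := by
      ext j
      simp only [Finset.mem_filter, Finset.mem_univ, true_and, Finset.mem_image, Finset.mem_Ioi]
      constructor
      · rintro ⟨hs, hlt⟩
        obtain ⟨r', hr'⟩ := (hc j).mp hs
        refine ⟨r', ?_, hr'⟩
        have : c r < c r' := by rw [hr']; exact hlt
        exact hmono.lt_iff_lt.mp this
      · rintro ⟨r', hr', rfl⟩
        exact ⟨hsideC r', hmono hr'⟩
    rw [himg, Finset.card_image_of_injective _ hmono.injective, Fin.card_Ioi]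
    have := r.isLt
    omega
  have hsum : ∀ r : Fin m,
      ((univ.filter (fun j : Fin n => side j = false ∧ c r < j)).card + 1)
        + (univ.filter (fun j : Fin n => j < c r)).card + m = n + (r : ℕ) + 1 := by
    intro r
    have e1 : (univ.filter (fun j : Fin n => side j = false ∧ c r < j))
        = (Finset.Ioi (c r)).filter (fun j => side j = false) := by
      ext j
      simp only [Finset.mem_filter, Finset.mem_univ, true_and, Finset.mem_Ioi]
      tauto
    have e2 : (univ.filter (fun j : Fin n => side j = true ∧ c r < j))
        = (Finset.Ioi (c r)).filter (fun j => side j = true) := by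
      ext j
      simp only [Finset.mem_filter, Finset.mem_univ, true_and, Finset.mem_Ioi]
      tauto
    have h1 : (univ.filter (fun j : Fin n => side j = false ∧ c r < j)).card
        + (univ.filter (fun j : Fin n => side j = true ∧ c r < j)).card
        = n - 1 - (c r : ℕ) := by
      rw [e1, e2]
      rw [show (Finset.Ioi (c r)).filter (fun j => side j = true)
            = (Finset.Ioi (c r)).filter (fun j => ¬ side j = false) from by
          apply Finset.filter_congr; intro j _; cases side j <;> simp]
      rw [Finset.card_filter_add_card_filter_not, Fin.card_Ioi]
    have h2 := hTcount r
    have h3 := hβval r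
    have h4 : (c r : ℕ) < n := (c r).isLt
    omega
  have hdomF : ∀ (r : Fin m) (A : Finset (Fin n)),
      ∀ v : Fin n, ∃ u ∈ domF side (c r) A, u ∈ closedNbhd G v := by
    intro r A v
    rcases lt_trichotomy v (c r) with h | h | h
    · exact ⟨c r, Finset.mem_insert_self _ _,
        (hmem v (c r)).mpr (Or.inr ((hside v (c r) h).mpr (hsideC r)))⟩
    · exact ⟨c r, Finset.mem_insert_self _ _, (hmem v (c r)).mpr (Or.inl h.symm)⟩
    · cases hsv : side v with
      | true => exact ⟨c r, Finset.mem_insert_self _ _,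
          (hmem v (c r)).mpr (Or.inr ((hAdj v (c r)).mpr (Or.inr ⟨h, hsv⟩)))⟩
      | false =>
        refine ⟨v, ?_, (hmem v v).mpr (Or.inl rfl)⟩
        exact Finset.mem_insert_of_mem
          (Finset.mem_union_left _ (Finset.mem_filter.mpr ⟨Finset.mem_univ _, hsv, h⟩))
  have hFmax : ∀ (r : Fin m) (A : Finset (Fin n)), A ⊆ Finset.Iio (c r) →
      ∀ u ∈ domF side (c r) A, side u = true → u ≤ c r := by
    intro r A hA u hu hsu
    rcases Finset.mem_insert.mp hu with h | h
    · exact le_of_eq h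
    · rcases Finset.mem_union.mp h with h | h
      · exact absurd hsu (by simp [(Finset.mem_filter.mp h).2.1])
      · exact le_of_lt (Finset.mem_Iio.mp (hA h))
  have hrec : ∀ (r : Fin m) (A : Finset (Fin n)), A ⊆ Finset.Iio (c r) →
      (domF side (c r) A).filter (fun j => j < c r) = A := by
    intro r A hA
    ext j
    simp only [Finset.mem_filter, domF, Finset.mem_insert, Finset.mem_union,
      Finset.mem_univ, true_and]
    constructor
    · rintro ⟨h1 | ⟨_, h2⟩ | h3, hlt⟩
      · exact absurd hlt (by simp [h1])
      · exact absurd h2 (not_lt_of_gt hlt)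
      · exact h3
    · intro hj
      exact ⟨Or.inr (Or.inr hj), Finset.mem_Iio.mp (hA hj)⟩
  have hcard : ∀ (r : Fin m) (A : Finset (Fin n)), A ⊆ Finset.Iio (c r) →
      (domF side (c r) A).card
        = ((univ.filter (fun j : Fin n => side j = false ∧ c r < j)).card + 1) + A.card := by
    intro r A hA
    have h1 : c r ∉ (Finset.univ.filter (fun j => side j = false ∧ c r < j)) ∪ A := by
      intro h
      rcases Finset.mem_union.mp h with h | h
      · exact absurd (Finset.mem_filter.mp h).2.2 (lt_irrefl _)
      · exact absurd (Finset.mem_Iio.mp (hA h)) (lt_irrefl _)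
    have h2 : Disjoint (Finset.univ.filter (fun j : Fin n => side j = false ∧ c r < j)) A := by
      rw [Finset.disjoint_left]
      intro j hj hj'
      exact absurd (lt_trans (Finset.mem_filter.mp hj).2.2 (Finset.mem_Iio.mp (hA hj')))
        (lt_irrefl _)
    rw [domF, Finset.card_insert_of_notMem h1, Finset.card_union_of_disjoint h2]
    omega
  refine ⟨?_, ?_, ?_, ?_, ?_⟩
  · -- the polynomial identity
    have hImem : ∀ u : Fin n,
        u ∈ univ.filter (fun j : Fin n => side j = false) ↔ side u = false := by
      intro u; simp
    have hDeq : (univ.powerset.filter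
          (fun S : Finset (Fin n) => ∀ v : Fin n, ∃ u ∈ S, u ∈ closedNbhd G v))
        = ((univ : Finset (Fin m)).biUnion
            (fun r => ((Finset.Iio (c r)).powerset).image (domF side (c r))))
          ∪ (if ∀ v : Fin n, ∃ u ∈ univ.filter (fun j : Fin n => side j = false),
                u ∈ closedNbhd G v
             then {univ.filter (fun j : Fin n => side j = false)} else ∅) := by
      ext S
      simp only [Finset.mem_filter, Finset.mem_powerset, Finset.mem_union, Finset.mem_biUnion,
        Finset.mem_image, Finset.mem_univ, true_and, Finset.subset_univ]
      constructor
      · intro hS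
        by_cases hT : ∃ r : Fin m, c r ∈ S
        · left
          obtain ⟨r₁, hr₁⟩ := hT
          have hne : (S.filter (fun j => side j = true)).Nonempty :=
            ⟨c r₁, Finset.mem_filter.mpr ⟨hr₁, hsideC r₁⟩⟩
          set t := (S.filter (fun j => side j = true)).max' hne with htdef
          have htS : t ∈ S ∧ side t = true :=
            Finset.mem_filter.mp ((S.filter (fun j => side j = true)).max'_mem hne)
          have hmaxt : ∀ u ∈ S, side u = true → u ≤ t := fun u hu hsu =>
            Finset.le_max' _ u (Finset.mem_filter.mpr ⟨hu, hsu⟩)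
          obtain ⟨r₀, hr₀⟩ := (hc t).mp htS.2
          refine ⟨r₀, S.filter (fun j => j < c r₀),
            fun j hj => Finset.mem_Iio.mpr (Finset.mem_filter.mp hj).2, ?_⟩
          · ext j
            simp only [domF, Finset.mem_insert, Finset.mem_union, Finset.mem_filter,
              Finset.mem_univ, true_and]
            constructor
            · rintro (h | ⟨hsj, hlt⟩ | ⟨hjS, _⟩)
              · rw [h, hr₀]; exact htS.1
              · obtain ⟨u, huS, hucn⟩ := hS j
                rcases (hmem j u).mp hucn with h | h
                · exact h ▸ huS
                · rcases (hAdj j u).mp h with ⟨hju, hsu⟩ | ⟨_, hsj'⟩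
                  · have hle := hmaxt u huS hsu
                    rw [← hr₀] at hle
                    exact absurd hle (not_le.mpr (lt_trans hlt hju))
                  · exact absurd hsj' (by simp [hsj])
              · exact hjS
            · intro hjS
              rcases lt_trichotomy j (c r₀) with h | h | h
              · exact Or.inr (Or.inr ⟨hjS, h⟩)
              · exact Or.inl h
              · cases hsj : side j with
                | true =>
                  have hle := hmaxt j hjS hsj
                  rw [← hr₀] at hle
                  exact absurd hle (not_le.mpr h)
                | false => exact Or.inr (Or.inl ⟨rfl, h⟩)
        · right
          push_neg at hT
          have hSI : S = univ.filter (fun j : Fin n => side j = false) := by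
            ext u
            rw [hImem u]
            constructor
            · intro huS
              cases hsu : side u with
              | true =>
                obtain ⟨r, hr⟩ := (hc u).mp hsu
                exact absurd huS (hr ▸ hT r)
              | false => rfl
            · intro hsu
              obtain ⟨u', hu'S, hcn⟩ := hS u
              rcases (hmem u u').mp hcn with h | h
              · exact h ▸ hu'S
              · rcases (hAdj u u').mp h with ⟨_, hsu'⟩ | ⟨_, hsu''⟩
                · obtain ⟨r, hr⟩ := (hc u').mp hsu'
                  exact absurd hu'S (hr ▸ hT r)
                · exact absurd hsu'' (by simp [hsu])
          have hcond : ∀ v : Fin n, ∃ u ∈ univ.filter (fun j : Fin n => side j = false),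
              u ∈ closedNbhd G v := by
            rw [← hSI]; exact hS
          have hcond' : ∀ v : Fin n, ∃ u, side u = false ∧ u ∈ closedNbhd G v := by
            intro v
            obtain ⟨u, hu, h⟩ := hcond v
            exact ⟨u, (hImem u).mp hu, h⟩
          rw [if_pos hcond']
          exact Finset.mem_singleton.mpr hSI
      · rintro (⟨r, A, hA, rfl⟩ | hSI)
        · exact fun v => hdomF r A v
        · split_ifs at hSI with hcond
          · rw [Finset.mem_singleton.mp hSI]
            intro v
            obtain ⟨u, h1, h2⟩ := hcond v
            exact ⟨u, (hImem u).mpr h1, h2⟩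
          · exact absurd hSI (Finset.notMem_empty S)
    have hpairwise : ((univ : Finset (Fin m)) : Set (Fin m)).PairwiseDisjoint
        (fun r => ((Finset.Iio (c r)).powerset).image (domF side (c r))) := by
      intro r _ r' _ hrr'
      rw [Function.onFun, Finset.disjoint_left]
      intro S hS hS'
      obtain ⟨A, hA, rfl⟩ := Finset.mem_image.mp hS
      obtain ⟨B, hB, hBe⟩ := Finset.mem_image.mp hS'
      have h1 : c r ≤ c r' := by
        refine hFmax r' B (Finset.mem_powerset.mp hB) (c r) ?_ (hsideC r)
        rw [hBe]
        exact Finset.mem_insert_self _ _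
      have h2 : c r' ≤ c r := by
        refine hFmax r A (Finset.mem_powerset.mp hA) (c r') ?_ (hsideC r')
        rw [← hBe]
        exact Finset.mem_insert_self _ _
      exact hrr' (hmono.injective (le_antisymm h1 h2))
    have hdisjU : Disjoint
        ((univ : Finset (Fin m)).biUnion
          (fun r => ((Finset.Iio (c r)).powerset).image (domF side (c r))))
        (if ∀ v : Fin n, ∃ u ∈ univ.filter (fun j : Fin n => side j = false),
              u ∈ closedNbhd G v
           then {univ.filter (fun j : Fin n => side j = false)} else ∅) := by
      rw [Finset.disjoint_right]
      intro S hSI hSb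
      have hSI' : S = univ.filter (fun j : Fin n => side j = false) := by
        split_ifs at hSI with h
        · exact Finset.mem_singleton.mp hSI
        · exact absurd hSI (Finset.notMem_empty S)
      obtain ⟨r, -, hS⟩ := Finset.mem_biUnion.mp hSb
      obtain ⟨A, -, rfl⟩ := Finset.mem_image.mp hS
      have hcr : c r ∈ univ.filter (fun j : Fin n => side j = false) :=
        hSI' ▸ Finset.mem_insert_self _ _
      rw [hImem] at hcr
      exact absurd (hsideC r) (by simp [hcr])
    rw [hDeq, Finset.sum_union hdisjU, Finset.sum_biUnion hpairwise]
    congr 1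
    · refine Finset.sum_congr rfl fun r _ => ?_
      dsimp only
      have hinj : ∀ A ∈ (Finset.Iio (c r)).powerset, ∀ B ∈ (Finset.Iio (c r)).powerset,
          domF side (c r) A = domF side (c r) B → A = B := by
        intro A hA B hB h
        rw [← hrec r A (Finset.mem_powerset.mp hA), ← hrec r B (Finset.mem_powerset.mp hB), h]
      rw [Finset.sum_image hinj]
      have hpt : ∀ A ∈ (Finset.Iio (c r)).powerset,
          (X : Polynomial ℕ) ^ (domF side (c r) A).card
            = X ^ ((univ.filter (fun j : Fin n => side j = false ∧ c r < j)).card + 1)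
              * X ^ A.card := by
        intro A hA
        rw [hcard r A (Finset.mem_powerset.mp hA), pow_add]
      rw [Finset.sum_congr rfl hpt, ← Finset.mul_sum, sum_powerset_pow_card,
        show (Finset.Iio (c r)).card = (univ.filter (fun j : Fin n => j < c r)).card from by
          rw [hβval r]; exact Fin.card_Iio (c r)]
    · by_cases hcond : ∀ v : Fin n, ∃ u ∈ univ.filter (fun j : Fin n => side j = false),
          u ∈ closedNbhd G v
      · rw [if_pos hcond, if_pos hcond, Finset.sum_singleton, one_smul]
      · rw [if_neg hcond, if_neg hcond, Finset.sum_empty, zero_smul]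
  · -- α antitone
    intro r r' hrr'
    have hsub : (univ.filter (fun j : Fin n => side j = false ∧ c r' < j))
        ⊆ (univ.filter (fun j : Fin n => side j = false ∧ c r < j)) := by
      intro j hj
      simp only [Finset.mem_filter, Finset.mem_univ, true_and] at hj ⊢
      exact ⟨hj.1, lt_of_le_of_lt (hmono.monotone hrr') hj.2⟩
    exact Nat.add_le_add_right (Finset.card_le_card hsub) 1
  · intro r
    exact Nat.le_add_left 1 _
  · -- β strict mono
    intro r r' hrr'
    dsimp only
    rw [hβval r, hβval r']
    exact hmono hrr'
  · intro r h1 h2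
    have ha := hsum ⟨r + 1, h2⟩
    have hb := hsum ⟨r, h1⟩
    have ea : ((⟨r + 1, h2⟩ : Fin m) : ℕ) = r + 1 := rfl
    have eb : ((⟨r, h1⟩ : Fin m) : ℕ) = r := rfl
    rw [ea] at ha
    rw [eb] at hb
    dsimp only
    omega
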